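/- Let A be an action set with partition {A^r, A^l, A^bi}, let a_bi ∈ A^bi and a_r ∈ A^r, and for n ≥ 0 write a_bi^n.t for the n-fold prefixing of t by a_bi. Then for every n ≥ 0, the processes p_n = a_r.(a_bi^n.(a_r.0)) and q_n = a_r.(a_bi^n.(a_r.0)) + a_r.(a_bi^n.0) satisfy p_n ≡_CC q_n. -/
import Mathlib


inductive Proc (A : Type) : Type
  | nil : Proc A
  | pre : A → Proc A → Proc A
  | add : Proc A → Proc A → Proc A

inductive Step {A : Type} : Proc A → A → Proc A → Prop
  | pre (a : A) (p : Proc A) : Step (.pre a p) a p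
  | addL {p : Proc A} {a : A} {p' : Proc A} (q : Proc A) :
      Step p a p' → Step (.add p q) a p'
  | addR {q : Proc A} {a : A} {q' : Proc A} (p : Proc A) :
      Step q a q' → Step (.add p q) a q'

/-- `initials p` is the set `I(p)` of actions that `p` can immediately perform. -/
def initials {A : Type} (p : Proc A) : Set A := {a | ∃ p', Step p a p'}

/-- `{Ar, Al, Abi}` is a partition of the action set `A` (cells may be empty). -/
def IsPartition {A : Type} (Ar Al Abi : Set A) : Prop :=
  (Ar ∪ Al ∪ Abi = Set.univ) ∧ Disjoint Ar Al ∧ Disjoint Ar Abi ∧ Disjoint Al Abi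

/-- Covariant-contravariant simulation w.r.t. covariant actions `Ar`,
contravariant actions `Al` and bivariant actions `Abi`. -/
def IsCCSim {A : Type} (Ar Al Abi : Set A) (S : Proc A → Proc A → Prop) : Prop :=
  ∀ p q, S p q →
    (∀ a ∈ Ar ∪ Abi, ∀ p', Step p a p' → ∃ q', Step q a q' ∧ S p' q') ∧
    (∀ a ∈ Al ∪ Abi, ∀ q', Step q a q' → ∃ p', Step p a p' ∧ S p' q')

/-- The covariant-contravariant simulation preorder `p ≲_CC q`. -/
def ccLe {A : Type} (Ar Al Abi : Set A) (p q : Proc A) : Prop :=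
  ∃ S, IsCCSim Ar Al Abi S ∧ S p q

/-- Covariant-contravariant simulation equivalence `p ≡_CC q`. -/
def ccEq {A : Type} (Ar Al Abi : Set A) (p q : Proc A) : Prop :=
  ccLe Ar Al Abi p q ∧ ccLe Ar Al Abi q p

/-- Conformance simulation. -/
def IsConfSim {A : Type} (R : Proc A → Proc A → Prop) : Prop :=
  ∀ p q, R p q →
    initials p ⊆ initials q ∧
    (∀ a q', Step q a q' → a ∈ initials p → ∃ p', Step p a p' ∧ R p' q')

/-- The conformance simulation preorder `p ≲_CS q`. -/
def csLe {A : Type} (p q : Proc A) : Prop := ∃ R, IsConfSim R ∧ R p q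

/-- Conformance simulation equivalence `p ≡_CS q`. -/
def csEq {A : Type} (p q : Proc A) : Prop := csLe p q ∧ csLe q p

/-- The conformance precongruence `p ⊑_CS q`. -/
def csPre {A : Type} (p q : Proc A) : Prop := csLe p q ∧ initials q ⊆ initials p

/-- Plain simulation. -/
def IsSim {A : Type} (S : Proc A → Proc A → Prop) : Prop :=
  ∀ p q, S p q → ∀ a p', Step p a p' → ∃ q', Step q a q' ∧ S p' q'

/-- The plain simulation preorder `p ≲_S q`. -/
def simLe {A : Type} (p q : Proc A) : Prop := ∃ S, IsSim S ∧ S p q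

/-- Ready simulation. -/
def IsRSim {A : Type} (S : Proc A → Proc A → Prop) : Prop :=
  ∀ p q, S p q → initials p = initials q ∧
    (∀ a p', Step p a p' → ∃ q', Step q a q' ∧ S p' q')

/-- The ready simulation preorder `p ≲_RS q`. -/
def rsLe {A : Type} (p q : Proc A) : Prop := ∃ S, IsRSim S ∧ S p q

/-- Ready conformance simulation: a conformance simulation that additionally
guarantees `I(q) ⊆ I(p)` for all related pairs. -/
def IsRCSim {A : Type} (R : Proc A → Proc A → Prop) : Prop :=
  IsConfSim R ∧ ∀ p q, R p q → initials q ⊆ initials p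

/-- The ready conformance simulation preorder `p ≲_RCS q`. -/
def rcsLe {A : Type} (p q : Proc A) : Prop := ∃ R, IsRCSim R ∧ R p q

/-- Open BCCSP terms (with variables indexed by `ℕ`). -/
inductive Term (A : Type) : Type
  | var : ℕ → Term A
  | nil : Term A
  | pre : A → Term A → Term A
  | add : Term A → Term A → Term A

/-- Closed substitution applied to an open term. -/
def Term.subst {A : Type} (σ : ℕ → Proc A) : Term A → Proc A
  | .var n => σ n
  | .nil => .nil
  | .pre a t => .pre a (t.subst σ)
  | .add s t => .add (s.subst σ) (t.subst σ)

/-- View a closed process as an (open) term. -/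
def Proc.toTerm {A : Type} : Proc A → Term A
  | .nil => .nil
  | .pre a p => .pre a p.toTerm
  | .add p q => .add p.toTerm q.toTerm

/-- Inequational derivability (between closed processes) from a set `E` of
inequations between open terms: the least relation containing all substitution
instances of `E` and closed under reflexivity, transitivity and the congruence
rules for prefixing and `+`. -/
inductive DerivLe {A : Type} (E : Set (Term A × Term A)) : Proc A → Proc A → Prop
  | ax (l r : Term A) (σ : ℕ → Proc A) : (l, r) ∈ E → DerivLe E (l.subst σ) (r.subst σ)
  | refl (p : Proc A) : DerivLe E p p
  | trans {p q r : Proc A} : DerivLe E p q → DerivLe E q r → DerivLe E p r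
  | pre (a : A) {p q : Proc A} : DerivLe E p q → DerivLe E (.pre a p) (.pre a q)
  | add {p q r s : Proc A} : DerivLe E p q → DerivLe E r s → DerivLe E (.add p r) (.add q s)

/-- Equational derivability (between closed processes) from a set `E` of
equations between open terms. -/
inductive DerivEq {A : Type} (E : Set (Term A × Term A)) : Proc A → Proc A → Prop
  | ax (l r : Term A) (σ : ℕ → Proc A) : (l, r) ∈ E → DerivEq E (l.subst σ) (r.subst σ)
  | refl (p : Proc A) : DerivEq E p p
  | symm {p q : Proc A} : DerivEq E p q → DerivEq E q p
  | trans {p q r : Proc A} : DerivEq E p q → DerivEq E q r → DerivEq E p r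
  | pre (a : A) {p q : Proc A} : DerivEq E p q → DerivEq E (.pre a p) (.pre a q)
  | add {p q r s : Proc A} : DerivEq E p q → DerivEq E r s → DerivEq E (.add p r) (.add q s)

/-- Substitution of (possibly open) terms for variables. -/
def Term.substT {A : Type} (σ : ℕ → Term A) : Term A → Term A
  | .var n => σ n
  | .nil => .nil
  | .pre a t => .pre a (t.substT σ)
  | .add s t => .add (s.substT σ) (t.substT σ)

/-- Equational derivability between open terms from a set `E` of equations. -/
inductive TDerivEq {A : Type} (E : Set (Term A × Term A)) : Term A → Term A → Prop
  | ax (l r : Term A) (σ : ℕ → Term A) : (l, r) ∈ E → TDerivEq E (l.substT σ) (r.substT σ)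
  | refl (t : Term A) : TDerivEq E t t
  | symm {s t : Term A} : TDerivEq E s t → TDerivEq E t s
  | trans {s t u : Term A} : TDerivEq E s t → TDerivEq E t u → TDerivEq E s u
  | pre (a : A) {s t : Term A} : TDerivEq E s t → TDerivEq E (.pre a s) (.pre a t)
  | add {s t u v : Term A} : TDerivEq E s t → TDerivEq E u v → TDerivEq E (.add s u) (.add t v)

/-- The bisimulation axioms B1–B4, as equations. -/
def BEqns (A : Type) : Set (Term A × Term A) :=
  { (.add (.var 0) (.var 1), .add (.var 1) (.var 0)),
    (.add (.add (.var 0) (.var 1)) (.var 2), .add (.var 0) (.add (.var 1) (.var 2))),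
    (.add (.var 0) (.var 0), .var 0),
    (.add (.var 0) .nil, .var 0) }

/-- The bisimulation axioms B1–B4, each used as two inequations. -/
def BIneqs (A : Type) : Set (Term A × Term A) := BEqns A ∪ Prod.swap '' BEqns A

/-- `npre a n p` is the `n`-fold prefixing `a.a.···.a.p`. -/
def npre {A : Type} (a : A) : ℕ → Proc A → Proc A
  | 0, p => p
  | n + 1, p => .pre a (npre a n p)

/-- For `a_bi ∈ A^bi` and `a_r ∈ A^r`, the processes
`p_n = a_r.(a_bi^n.(a_r.0))` and `q_n = a_r.(a_bi^n.(a_r.0)) + a_r.(a_bi^n.0)`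
are covariant-contravariant simulation equivalent. -/
theorem cc_counterexample_equiv {A : Type} (Ar Al Abi : Set A)
    (hpart : IsPartition Ar Al Abi)
    (abi ar : A) (habi : abi ∈ Abi) (har : ar ∈ Ar) (n : ℕ) :
    ccEq Ar Al Abi
      (.pre ar (npre abi n (.pre ar .nil)))
      (.add (.pre ar (npre abi n (.pre ar .nil)))
            (.pre ar (npre abi n .nil))) := by
  obtain ⟨-, hrl, hrbi, hlbi⟩ := hpart
  have harn : ar ∉ Al ∪ Abi := by
    rintro (h | h)
    · exact Set.disjoint_left.mp hrl har h
    · exact Set.disjoint_left.mp hrbi har h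
  constructor
  · -- p ≲ q
    refine ⟨fun x y => x = y ∨
      (x = .pre ar (npre abi n (.pre ar .nil)) ∧
       y = .add (.pre ar (npre abi n (.pre ar .nil))) (.pre ar (npre abi n .nil))),
      ?_, Or.inr ⟨rfl, rfl⟩⟩
    rintro x y (rfl | ⟨rfl, rfl⟩)
    · exact ⟨fun a _ p' h => ⟨p', h, Or.inl rfl⟩, fun a _ q' h => ⟨q', h, Or.inl rfl⟩⟩
    · constructor
      · rintro a _ p' h
        cases h
        exact ⟨_, Step.addL _ (Step.pre ar _), Or.inl rfl⟩
      · rintro a ha q' h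
        exfalso
        rcases h with _ | ⟨_, h⟩ | ⟨_, h⟩ <;> cases h <;> exact harn ha
  · -- q ≲ p
    refine ⟨fun x y => x = y ∨
      (∃ k, x = npre abi k (Proc.nil : Proc A) ∧ y = npre abi k (.pre ar .nil)) ∨
      (x = .add (.pre ar (npre abi n (.pre ar .nil))) (.pre ar (npre abi n .nil)) ∧
       y = .pre ar (npre abi n (.pre ar .nil))),
      ?_, Or.inr (Or.inr ⟨rfl, rfl⟩)⟩
    rintro x y (rfl | ⟨k, rfl, rfl⟩ | ⟨rfl, rfl⟩)
    · exact ⟨fun a _ p' h => ⟨p', h, Or.inl rfl⟩, fun a _ q' h => ⟨q', h, Or.inl rfl⟩⟩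
    · cases k with
      | zero =>
        constructor
        · rintro a _ p' h; cases h
        · rintro a ha q' h
          exfalso; cases h; exact harn ha
      | succ k =>
        constructor
        · rintro a _ p' h
          cases h
          exact ⟨npre abi k (.pre ar .nil), Step.pre abi _, Or.inr (Or.inl ⟨k, rfl, rfl⟩)⟩
        · rintro a _ q' h
          cases h
          exact ⟨npre abi k .nil, Step.pre abi _, Or.inr (Or.inl ⟨k, rfl, rfl⟩)⟩
    · constructor
      · rintro a _ p' h
        rcases h with _ | ⟨_, h⟩ | ⟨_, h⟩ <;> cases h
        · exact ⟨_, Step.pre ar _, Or.inl rfl⟩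
        · exact ⟨_, Step.pre ar _, Or.inr (Or.inl ⟨n, rfl, rfl⟩)⟩
      · rintro a ha q' h
        exfalso; cases h; exact harn ha
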